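/- arXiv:2510.12921 — 3 statements merged into one kernel-verified Lean document; each statement's English description precedes it below -/
import Mathlib

section
/- For complex numbers α₁, α₂ with Re(α₁+α₂) > 1 and σ₁, σ₂ with Re(σ₁) > 0, Re(σ₂) > 0, the integral ∫_{-∞}^{∞} (1+iσ₁t)^{-α₁} (1+iσ₂t)^{-α₂} dt equals 0. -/
open MeasureTheory Complex

open Filter Real Topology

set_option maxHeartbeats 1000000

private lemma cbv_sigma_bounds (σ : ℂ) (hσ : 0 < σ.re) :
    ∃ δ c : ℝ, 0 < δ ∧ 0 < c ∧ ∀ z : ℂ, z.im ≤ δ →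
      (1 + Complex.I * σ * z) ∈ Complex.slitPlane ∧
      c * (1 + ‖z‖) ≤ ‖1 + Complex.I * σ * z‖ := by
  have hσ0 : σ ≠ 0 := fun h => by simp [h] at hσ
  set d : ℝ := σ.re / Complex.normSq σ with hd
  have hN : 0 < Complex.normSq σ := Complex.normSq_pos.mpr hσ0
  have hd0 : 0 < d := div_pos hσ hN
  set P : ℂ := Complex.I / σ with hP
  have hPim : P.im = d := by
    simp [hP, Complex.div_im, hd]
  have hIP : Complex.I * σ * P = -1 := by
    rw [hP]
    field_simp
    rw [Complex.I_sq]
  have key : ∀ z : ℂ, 1 + Complex.I * σ * z = (Complex.I * σ) * (z - P) := by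
    intro z
    rw [mul_sub, mul_assoc, ← mul_assoc, hIP]
    ring
  have habs : ∀ z : ℂ, ‖1 + Complex.I * σ * z‖
      = ‖σ‖ * ‖z - P‖ := by
    intro z
    rw [key, norm_mul, norm_mul, Complex.norm_I, one_mul]
  have h1 : ∀ z : ℂ, z.im ≤ d / 2 → d / 2 ≤ ‖z - P‖ := by
    intro z hz
    have h := Complex.abs_im_le_norm (z - P)
    have him : (z - P).im = z.im - d := by rw [Complex.sub_im, hPim]
    rw [him] at h
    have : d - z.im ≤ |z.im - d| := by rw [abs_sub_comm]; exact le_abs_self _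
    linarith
  have h2 : ∀ z : ℂ, ‖z‖ - ‖P‖ ≤ ‖z - P‖ := by
    intro z
    have := norm_add_le (z - P) P
    simp only [sub_add_cancel] at this
    linarith
  set A : ℝ := ‖P‖ with hA
  have hA0 : 0 ≤ A := norm_nonneg P
  set c' : ℝ := min (d / (2 * (2 + 2 * A))) (1 / 2) with hc'
  have hc'0 : 0 < c' := lt_min (by positivity) (by norm_num)
  refine ⟨d / 2, ‖σ‖ * c', by positivity, mul_pos (norm_pos_iff.mpr hσ0) hc'0, ?_⟩
  intro z hz
  constructor
  · -- slitPlane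
    by_contra h
    rw [Complex.mem_slitPlane_iff] at h
    push_neg at h
    obtain ⟨hre, him0⟩ := h
    set w : ℂ := 1 + Complex.I * σ * z with hw
    have hzP : z - P = w / (Complex.I * σ) := by
      rw [eq_div_iff (by simp [hσ0, Complex.I_ne_zero])]
      rw [hw, key z]
      ring
    have hzim : z.im = d + (w / (Complex.I * σ)).im := by
      have : z = P + w / (Complex.I * σ) := by rw [← hzP]; ring
      rw [this, Complex.add_im, hPim]
    have hdiv : (w / (Complex.I * σ)).im = -w.re * σ.re / Complex.normSq σ := by
      rw [Complex.div_im]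
      simp [Complex.normSq_mul, him0, Complex.mul_im, Complex.mul_re]
      ring
    have hwre : w.re ≤ 0 := hre
    have : d ≤ z.im := by
      rw [hzim, hdiv]
      have : 0 ≤ -w.re * σ.re / Complex.normSq σ :=
        div_nonneg (mul_nonneg (by linarith) hσ.le) hN.le
      linarith
    linarith
  · -- lower bound
    have hzP : c' * (1 + ‖z‖) ≤ ‖z - P‖ := by
      rcases le_or_gt (‖z‖) (1 + 2 * A) with h | h
      · have e1 : c' * (1 + ‖z‖) ≤ (d / (2 * (2 + 2 * A))) * (2 + 2 * A) := by
          apply mul_le_mul (min_le_left _ _) (by linarith) (by positivity) (by positivity)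
        have e2 : (d / (2 * (2 + 2 * A))) * (2 + 2 * A) = d / 2 := by
          field_simp
        rw [e2] at e1
        exact e1.trans (h1 z hz)
      · have e1 : c' * (1 + ‖z‖) ≤ (1 / 2) * (1 + ‖z‖) := by
          apply mul_le_mul_of_nonneg_right (min_le_right _ _) (by positivity)
        have e2 : (1 / 2) * (1 + ‖z‖) ≤ ‖z‖ - A := by linarith
        linarith [h2 z]
    rw [habs, mul_assoc]
    exact mul_le_mul_of_nonneg_left hzP (norm_nonneg σ)

private lemma cbv_abs_cpow_bound (w β : ℂ) :
    ‖w ^ (-β)‖ ≤ ‖w‖ ^ (-β.re) * Real.exp (π * |β.im|) := by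
  refine (Complex.norm_cpow_le w (-β)).trans ?_
  rw [Complex.neg_re, Complex.neg_im, div_eq_mul_inv, ← Real.exp_neg]
  refine mul_le_mul_of_nonneg_left (Real.exp_le_exp.mpr ?_) (Real.rpow_nonneg (norm_nonneg w) _)
  have h1 : -(w.arg * -β.im) = w.arg * β.im := by ring
  rw [h1]
  calc w.arg * β.im ≤ |w.arg * β.im| := le_abs_self _
    _ = |w.arg| * |β.im| := abs_mul _ _
    _ ≤ π * |β.im| := mul_le_mul_of_nonneg_right (Complex.abs_arg_le_pi w) (abs_nonneg _)

private lemma cbv_rpow_sandwich {c C A x : ℝ} (hc : 0 < c) (hA : 0 < A)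
    (h1 : c * A ≤ x) (h2 : x ≤ C * A) (r : ℝ) :
    x ^ r ≤ max (C ^ r) (c ^ r) * A ^ r := by
  have hx : 0 < x := lt_of_lt_of_le (by positivity) h1
  have hC : 0 < C := by nlinarith
  rcases le_or_gt 0 r with hr | hr
  · calc x ^ r ≤ (C * A) ^ r := Real.rpow_le_rpow hx.le h2 hr
      _ = C ^ r * A ^ r := Real.mul_rpow hC.le hA.le
      _ ≤ max (C ^ r) (c ^ r) * A ^ r :=
        mul_le_mul_of_nonneg_right (le_max_left _ _) (Real.rpow_nonneg hA.le _)
  · calc x ^ r ≤ (c * A) ^ r := Real.rpow_le_rpow_of_nonpos (by positivity) h1 hr.le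
      _ = c ^ r * A ^ r := Real.mul_rpow hc.le hA.le
      _ ≤ max (C ^ r) (c ^ r) * A ^ r :=
        mul_le_mul_of_nonneg_right (le_max_right _ _) (Real.rpow_nonneg hA.le _)

private lemma cbv_integrable_aux {p : ℝ} (hp : 1 < p) :
    Integrable (fun t : ℝ => (1 + |t|) ^ (-p)) := by
  have h := integrable_one_add_norm (E := ℝ) (μ := volume) (r := p) (by simpa using hp)
  simpa [Real.norm_eq_abs] using h

private lemma cbv_tendsto_aux {K r : ℝ} (hr : 0 < r) :
    Tendsto (fun T : ℝ => K * (1 + |T|) ^ (-r)) atTop (𝓝 0) := by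
  have h1 : Tendsto (fun T : ℝ => 1 + |T|) atTop atTop :=
    tendsto_atTop_add_const_left _ 1 tendsto_abs_atTop_atTop
  have h2 := (tendsto_rpow_neg_atTop hr).comp h1
  have := h2.const_mul K
  simpa using this

theorem cauchy_beta_integral_vanishing (α₁ α₂ σ₁ σ₂ : ℂ)
    (hα : 1 < (α₁ + α₂).re) (hσ₁ : 0 < σ₁.re) (hσ₂ : 0 < σ₂.re) :
    ∫ t : ℝ, (1 + Complex.I * σ₁ * t) ^ (-α₁) * (1 + Complex.I * σ₂ * t) ^ (-α₂) = 0 := by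
  obtain ⟨δ₁, c₁, hδ₁, hc₁, H₁⟩ := cbv_sigma_bounds σ₁ hσ₁
  obtain ⟨δ₂, c₂, hδ₂, hc₂, H₂⟩ := cbv_sigma_bounds σ₂ hσ₂
  set δ : ℝ := min δ₁ δ₂ with hδdef
  have hδ0 : 0 < δ := lt_min hδ₁ hδ₂
  have Hs : ∀ z : ℂ, z.im ≤ δ →
      ((1 + Complex.I * σ₁ * z) ∈ Complex.slitPlane ∧
       (1 + Complex.I * σ₂ * z) ∈ Complex.slitPlane ∧
       c₁ * (1 + ‖z‖) ≤ ‖1 + Complex.I * σ₁ * z‖ ∧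
       c₂ * (1 + ‖z‖) ≤ ‖1 + Complex.I * σ₂ * z‖) := by
    intro z hz
    obtain ⟨a1, a2⟩ := H₁ z (hz.trans (min_le_left _ _))
    obtain ⟨b1, b2⟩ := H₂ z (hz.trans (min_le_right _ _))
    exact ⟨a1, b1, a2, b2⟩
  set p : ℝ := (α₁ + α₂).re with hpdef
  have hp1 : 1 < p := hα
  have hp0 : 0 < p := by linarith
  have hup : ∀ (σ : ℂ) (z : ℂ), ‖1 + Complex.I * σ * z‖
      ≤ (1 + ‖σ‖) * (1 + ‖z‖) := by
    intro σ z
    calc ‖1 + Complex.I * σ * z‖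
        ≤ ‖1‖ + ‖Complex.I * σ * z‖ := norm_add_le _ _
      _ = 1 + ‖σ‖ * ‖z‖ := by
          simp [norm_mul]
      _ ≤ (1 + ‖σ‖) * (1 + ‖z‖) := by
          nlinarith [norm_nonneg σ, norm_nonneg z]
  -- core bound
  have core : ∀ β₁ β₂ : ℂ, p ≤ β₁.re + β₂.re → ∃ K : ℝ, 0 ≤ K ∧ ∀ z : ℂ, z.im ≤ δ →
      ‖(1 + Complex.I * σ₁ * z) ^ (-β₁)‖ *
      ‖(1 + Complex.I * σ₂ * z) ^ (-β₂)‖ ≤ K * (1 + ‖z‖) ^ (-p) := by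
    intro β₁ β₂ hs
    set M₁ : ℝ := max ((1 + ‖σ₁‖) ^ (-β₁.re)) (c₁ ^ (-β₁.re)) with hM₁
    set M₂ : ℝ := max ((1 + ‖σ₂‖) ^ (-β₂.re)) (c₂ ^ (-β₂.re)) with hM₂
    have hM₁0 : 0 ≤ M₁ := le_trans (Real.rpow_nonneg hc₁.le _) (le_max_right _ _)
    have hM₂0 : 0 ≤ M₂ := le_trans (Real.rpow_nonneg hc₂.le _) (le_max_right _ _)
    set E₁ : ℝ := Real.exp (π * |β₁.im|) with hE₁
    set E₂ : ℝ := Real.exp (π * |β₂.im|) with hE₂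
    refine ⟨M₁ * E₁ * (M₂ * E₂), by positivity, ?_⟩
    intro z hz
    obtain ⟨_, _, l₁, l₂⟩ := Hs z hz
    have hz1 : (0:ℝ) < 1 + ‖z‖ := by positivity
    have b₁ : ‖(1 + Complex.I * σ₁ * z) ^ (-β₁)‖
        ≤ M₁ * E₁ * (1 + ‖z‖) ^ (-β₁.re) := by
      calc ‖(1 + Complex.I * σ₁ * z) ^ (-β₁)‖
          ≤ ‖1 + Complex.I * σ₁ * z‖ ^ (-β₁.re) * E₁ := cbv_abs_cpow_bound _ _
        _ ≤ (M₁ * (1 + ‖z‖) ^ (-β₁.re)) * E₁ := by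
            apply mul_le_mul_of_nonneg_right _ (Real.exp_nonneg _)
            exact cbv_rpow_sandwich hc₁ hz1 l₁ (hup σ₁ z) (-β₁.re)
        _ = M₁ * E₁ * (1 + ‖z‖) ^ (-β₁.re) := by ring
    have b₂ : ‖(1 + Complex.I * σ₂ * z) ^ (-β₂)‖
        ≤ M₂ * E₂ * (1 + ‖z‖) ^ (-β₂.re) := by
      calc ‖(1 + Complex.I * σ₂ * z) ^ (-β₂)‖
          ≤ ‖1 + Complex.I * σ₂ * z‖ ^ (-β₂.re) * E₂ := cbv_abs_cpow_bound _ _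
        _ ≤ (M₂ * (1 + ‖z‖) ^ (-β₂.re)) * E₂ := by
            apply mul_le_mul_of_nonneg_right _ (Real.exp_nonneg _)
            exact cbv_rpow_sandwich hc₂ hz1 l₂ (hup σ₂ z) (-β₂.re)
        _ = M₂ * E₂ * (1 + ‖z‖) ^ (-β₂.re) := by ring
    calc ‖(1 + Complex.I * σ₁ * z) ^ (-β₁)‖ *
        ‖(1 + Complex.I * σ₂ * z) ^ (-β₂)‖
        ≤ (M₁ * E₁ * (1 + ‖z‖) ^ (-β₁.re)) *
          (M₂ * E₂ * (1 + ‖z‖) ^ (-β₂.re)) := by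
          apply mul_le_mul b₁ b₂ (norm_nonneg _) (by positivity)
      _ = M₁ * E₁ * (M₂ * E₂) * ((1 + ‖z‖) ^ (-β₁.re) * (1 + ‖z‖) ^ (-β₂.re)) := by
          ring
      _ = M₁ * E₁ * (M₂ * E₂) * (1 + ‖z‖) ^ (-(β₁.re + β₂.re)) := by
          rw [← Real.rpow_add hz1]
          ring_nf
      _ ≤ M₁ * E₁ * (M₂ * E₂) * (1 + ‖z‖) ^ (-p) := by
          apply mul_le_mul_of_nonneg_left _ (by positivity)
          exact Real.rpow_le_rpow_of_exponent_le (by linarith [norm_nonneg z]) (by linarith)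
  obtain ⟨K₀, hK₀, B₀⟩ := core α₁ α₂ (le_of_eq (Complex.add_re α₁ α₂).symm)
  obtain ⟨K₁, hK₁, B₁⟩ := core (α₁ + 1) α₂ (by simp only [hpdef, Complex.add_re, Complex.one_re]; linarith)
  obtain ⟨K₂, hK₂, B₂⟩ := core α₁ (α₂ + 1) (by simp only [hpdef, Complex.add_re, Complex.one_re]; linarith)
  set f : ℂ → ℂ := fun z => (1 + Complex.I * σ₁ * z) ^ (-α₁) * (1 + Complex.I * σ₂ * z) ^ (-α₂)
    with hfdef
  set f' : ℂ → ℂ := fun z =>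
      (-α₁ * (1 + Complex.I * σ₁ * z) ^ (-α₁ - 1) * (Complex.I * σ₁)) *
        (1 + Complex.I * σ₂ * z) ^ (-α₂)
      + (1 + Complex.I * σ₁ * z) ^ (-α₁) *
        (-α₂ * (1 + Complex.I * σ₂ * z) ^ (-α₂ - 1) * (Complex.I * σ₂)) with hf'def
  set K' : ℝ := ‖α₁‖ * ‖σ₁‖ * K₁ + ‖α₂‖ * ‖σ₂‖ * K₂
    with hK'def
  have hK'0 : 0 ≤ K' := by positivity
  have hfb : ∀ z : ℂ, z.im ≤ δ → ‖f z‖ ≤ K₀ * (1 + ‖z‖) ^ (-p) := by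
    intro z hz
    rw [hfdef]
    simp only [norm_mul]
    exact B₀ z hz
  have hf'b : ∀ z : ℂ, z.im ≤ δ → ‖f' z‖ ≤ K' * (1 + ‖z‖) ^ (-p) := by
    intro z hz
    have e₁ : (-α₁ - 1 : ℂ) = -(α₁ + 1) := by ring
    have e₂ : (-α₂ - 1 : ℂ) = -(α₂ + 1) := by ring
    rw [hf'def]
    simp only []
    calc ‖(-α₁ * (1 + Complex.I * σ₁ * z) ^ (-α₁ - 1) * (Complex.I * σ₁)) *
          (1 + Complex.I * σ₂ * z) ^ (-α₂)
        + (1 + Complex.I * σ₁ * z) ^ (-α₁) *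
          (-α₂ * (1 + Complex.I * σ₂ * z) ^ (-α₂ - 1) * (Complex.I * σ₂))‖
        ≤ ‖(-α₁ * (1 + Complex.I * σ₁ * z) ^ (-α₁ - 1) * (Complex.I * σ₁)) *
          (1 + Complex.I * σ₂ * z) ^ (-α₂)‖
        + ‖(1 + Complex.I * σ₁ * z) ^ (-α₁) *
          (-α₂ * (1 + Complex.I * σ₂ * z) ^ (-α₂ - 1) * (Complex.I * σ₂))‖ := norm_add_le _ _
      _ = ‖α₁‖ * ‖σ₁‖ *
            (‖(1 + Complex.I * σ₁ * z) ^ (-(α₁+1))‖ *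
             ‖(1 + Complex.I * σ₂ * z) ^ (-α₂)‖)
        + ‖α₂‖ * ‖σ₂‖ *
            (‖(1 + Complex.I * σ₁ * z) ^ (-α₁)‖ *
             ‖(1 + Complex.I * σ₂ * z) ^ (-(α₂+1))‖) := by
          rw [← e₁, ← e₂]
          simp only [norm_mul, norm_neg, Complex.norm_I]
          ring
      _ ≤ ‖α₁‖ * ‖σ₁‖ * (K₁ * (1 + ‖z‖) ^ (-p))
        + ‖α₂‖ * ‖σ₂‖ * (K₂ * (1 + ‖z‖) ^ (-p)) := by
          apply add_le_add
          · exact mul_le_mul_of_nonneg_left (B₁ z hz) (by positivity)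
          · exact mul_le_mul_of_nonneg_left (B₂ z hz) (by positivity)
      _ = K' * (1 + ‖z‖) ^ (-p) := by rw [hK'def]; ring
  have hder : ∀ z : ℂ, z.im ≤ δ → HasDerivAt f (f' z) z := by
    intro z hz
    obtain ⟨s₁, s₂, _, _⟩ := Hs z hz
    have d₁ : HasDerivAt (fun z : ℂ => 1 + Complex.I * σ₁ * z) (Complex.I * σ₁) z := by
      simpa using ((hasDerivAt_id z).const_mul (Complex.I * σ₁)).const_add 1
    have d₂ : HasDerivAt (fun z : ℂ => 1 + Complex.I * σ₂ * z) (Complex.I * σ₂) z := by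
      simpa using ((hasDerivAt_id z).const_mul (Complex.I * σ₂)).const_add 1
    have D₁ := d₁.cpow_const (c := -α₁) s₁
    have D₂ := d₂.cpow_const (c := -α₂) s₂
    exact D₁.mul D₂
  have hbase₁ : Continuous (fun z : ℂ => 1 + Complex.I * σ₁ * z) :=
    continuous_const.add (continuous_const.mul continuous_id)
  have hbase₂ : Continuous (fun z : ℂ => 1 + Complex.I * σ₂ * z) :=
    continuous_const.add (continuous_const.mul continuous_id)
  have himz : ∀ (u t : ℝ), ((t : ℂ) - (u : ℂ) * Complex.I).im = -u := by
    intro u t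
    simp
  have hcontf : ∀ x : ℝ, -x ≤ δ → Continuous (fun t : ℝ => f ((t : ℂ) - (x : ℂ) * Complex.I)) := by
    intro x hx
    rw [continuous_iff_continuousAt]
    intro t
    have hline : ContinuousAt (fun t : ℝ => ((t : ℂ) - (x : ℂ) * Complex.I)) t :=
      (Complex.continuous_ofReal.sub continuous_const).continuousAt
    obtain ⟨s₁, s₂, _, _⟩ := Hs ((t : ℂ) - (x : ℂ) * Complex.I) (by rw [himz]; exact hx)
    have hin : ContinuousAt f ((t : ℂ) - (x : ℂ) * Complex.I) :=
      ((hbase₁.continuousAt.cpow continuousAt_const s₁).mul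
        (hbase₂.continuousAt.cpow continuousAt_const s₂))
    exact ContinuousAt.comp (f := fun t : ℝ => ((t : ℂ) - (x : ℂ) * Complex.I)) (x := t) hin hline
  have hcontf' : ∀ x : ℝ, -x ≤ δ →
      Continuous (fun t : ℝ => f' ((t : ℂ) - (x : ℂ) * Complex.I)) := by
    intro x hx
    rw [continuous_iff_continuousAt]
    intro t
    have hline : ContinuousAt (fun t : ℝ => ((t : ℂ) - (x : ℂ) * Complex.I)) t :=
      (Complex.continuous_ofReal.sub continuous_const).continuousAt
    obtain ⟨s₁, s₂, _, _⟩ := Hs ((t : ℂ) - (x : ℂ) * Complex.I) (by rw [himz]; exact hx)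
    have hin : ContinuousAt f' ((t : ℂ) - (x : ℂ) * Complex.I) := by
      apply ContinuousAt.add
      · exact ((continuousAt_const.mul (hbase₁.continuousAt.cpow continuousAt_const s₁)).mul
          continuousAt_const).mul (hbase₂.continuousAt.cpow continuousAt_const s₂)
      · exact (hbase₁.continuousAt.cpow continuousAt_const s₁).mul
          ((continuousAt_const.mul (hbase₂.continuousAt.cpow continuousAt_const s₂)).mul
            continuousAt_const)
    exact ContinuousAt.comp (f := fun t : ℝ => ((t : ℂ) - (x : ℂ) * Complex.I)) (x := t) hin hline
  have transfer : ∀ (x t : ℝ),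
      (1 + ‖(t : ℂ) - (x : ℂ) * Complex.I‖) ^ (-p) ≤ (1 + |t|) ^ (-p) := by
    intro x t
    have h1 : |t| ≤ ‖(t : ℂ) - (x : ℂ) * Complex.I‖ := by
      have := Complex.abs_re_le_norm ((t : ℂ) - (x : ℂ) * Complex.I)
      simpa using this
    exact Real.rpow_le_rpow_of_nonpos (by positivity) (by linarith) (by linarith)
  have hfint : ∀ x : ℝ, -x ≤ δ →
      Integrable (fun t : ℝ => f ((t : ℂ) - (x : ℂ) * Complex.I)) := by
    intro x hx
    apply ((cbv_integrable_aux hp1).const_mul K₀).mono' (hcontf x hx).aestronglyMeasurable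
    filter_upwards with t
    calc ‖f ((t : ℂ) - (x : ℂ) * Complex.I)‖
        ≤ K₀ * (1 + ‖(t : ℂ) - (x : ℂ) * Complex.I‖) ^ (-p) :=
          hfb _ (by rw [himz]; exact hx)
      _ ≤ K₀ * (1 + |t|) ^ (-p) := mul_le_mul_of_nonneg_left (transfer x t) hK₀
  set G : ℝ → ℂ := fun x => ∫ t : ℝ, f ((t : ℂ) - (x : ℂ) * Complex.I) with hGdef
  have hGd : ∀ x : ℝ, 0 ≤ x → HasDerivAt G 0 x := by
    intro x hx
    have hball : ∀ u ∈ Metric.ball x (δ/2), -u ≤ δ := by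
      intro u hu
      rw [Metric.mem_ball, Real.dist_eq] at hu
      have := abs_lt.mp hu
      linarith
    have step := hasDerivAt_integral_of_dominated_loc_of_deriv_le
      (F := fun (u : ℝ) (t : ℝ) => f ((t : ℂ) - (u : ℂ) * Complex.I))
      (F' := fun (u : ℝ) (t : ℝ) => (-Complex.I) * f' ((t : ℂ) - (u : ℂ) * Complex.I))
      (x₀ := x) (bound := fun t : ℝ => K' * (1 + |t|) ^ (-p)) (Metric.ball_mem_nhds x (half_pos hδ0))
      (Filter.eventually_of_mem (Metric.ball_mem_nhds x (half_pos hδ0))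
        (fun u hu => (hcontf u (hball u hu)).aestronglyMeasurable))
      (hfint x (by linarith))
      ((continuous_const.mul (hcontf' x (by linarith))).aestronglyMeasurable)
      (ae_of_all _ ?_) ((cbv_integrable_aux hp1).const_mul K') (ae_of_all _ ?_)
    · obtain ⟨hintF', hG⟩ := step
      have hψ : Integrable (fun t : ℝ => f' ((t : ℂ) - (x : ℂ) * Complex.I)) := by
        have h2 := hintF'.const_mul Complex.I
        have h3 : (fun t : ℝ => Complex.I *
            ((-Complex.I) * f' ((t : ℂ) - (x : ℂ) * Complex.I)))
            = fun t : ℝ => f' ((t : ℂ) - (x : ℂ) * Complex.I) := by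
          funext t
          rw [← mul_assoc]
          simp [Complex.I_mul_I]
        rwa [h3] at h2
      have hφd : ∀ T : ℝ, HasDerivAt (fun s : ℝ => f ((s : ℂ) - (x : ℂ) * Complex.I))
          (f' ((T : ℂ) - (x : ℂ) * Complex.I)) T := by
        intro T
        have hE : HasDerivAt (fun w : ℂ => w - (x : ℂ) * Complex.I) 1 (T : ℂ) :=
          (hasDerivAt_id _).sub_const _
        have hF1 : HasDerivAt f (f' ((T : ℂ) - (x : ℂ) * Complex.I))
            ((T : ℂ) - (x : ℂ) * Complex.I) := hder _ (by rw [himz]; linarith)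
        simpa using (HasDerivAt.comp ((T : ℝ) : ℂ) hF1 hE).comp_ofReal
      have h3 : ∀ T : ℝ, (∫ s in (-T)..T, f' ((s : ℂ) - (x : ℂ) * Complex.I))
          = f ((T : ℂ) - (x : ℂ) * Complex.I) - f (((-T : ℝ) : ℂ) - (x : ℂ) * Complex.I) :=
        fun T => intervalIntegral.integral_eq_sub_of_hasDerivAt (fun s _ => hφd s)
          hψ.intervalIntegrable
      have h4 : Tendsto (fun T : ℝ => ∫ s in (-T)..T, f' ((s : ℂ) - (x : ℂ) * Complex.I))
          atTop (𝓝 (∫ t : ℝ, f' ((t : ℂ) - (x : ℂ) * Complex.I))) :=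
        intervalIntegral_tendsto_integral hψ tendsto_neg_atTop_atBot tendsto_id
      have hnorm : ∀ T : ℝ, ‖f ((T : ℂ) - (x : ℂ) * Complex.I)‖ ≤ K₀ * (1 + |T|) ^ (-p) := by
        intro T
        exact (hfb _ (by rw [himz]; linarith)).trans
          (mul_le_mul_of_nonneg_left (transfer x T) hK₀)
      have h5a : Tendsto (fun T : ℝ => f ((T : ℂ) - (x : ℂ) * Complex.I)) atTop (𝓝 0) :=
        squeeze_zero_norm hnorm (cbv_tendsto_aux hp0)
      have h5b : Tendsto (fun T : ℝ => f (((-T : ℝ) : ℂ) - (x : ℂ) * Complex.I)) atTop (𝓝 0) :=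
        squeeze_zero_norm (fun T => by simpa [abs_neg] using hnorm (-T)) (cbv_tendsto_aux hp0)
      have h5 : Tendsto (fun T : ℝ => f ((T : ℂ) - (x : ℂ) * Complex.I)
          - f (((-T : ℝ) : ℂ) - (x : ℂ) * Complex.I)) atTop (𝓝 0) := by
        simpa using h5a.sub h5b
      rw [funext h3] at h4
      have hzero2 : (∫ t : ℝ, f' ((t : ℂ) - (x : ℂ) * Complex.I)) = 0 :=
        tendsto_nhds_unique h4 h5
      have hzero : (∫ t : ℝ, (-Complex.I) * f' ((t : ℂ) - (x : ℂ) * Complex.I)) = 0 := by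
        rw [integral_const_mul, hzero2, mul_zero]
      rw [hGdef]
      exact hzero ▸ hG
    · -- h_bound
      intro t u hu
      rw [norm_mul]
      have : ‖(-Complex.I : ℂ)‖ = 1 := by simp
      rw [this, one_mul]
      calc ‖f' ((t : ℂ) - (u : ℂ) * Complex.I)‖
          ≤ K' * (1 + ‖(t : ℂ) - (u : ℂ) * Complex.I‖) ^ (-p) :=
            hf'b _ (by rw [himz]; exact hball u hu)
        _ ≤ K' * (1 + |t|) ^ (-p) := mul_le_mul_of_nonneg_left (transfer u t) hK'0
    · -- h_diff
      intro t u hu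
      have hE : HasDerivAt (fun w : ℂ => (t : ℂ) - w * Complex.I) (-Complex.I) ((u : ℝ) : ℂ) := by
        simpa using ((hasDerivAt_id ((u : ℝ) : ℂ)).mul_const Complex.I).const_sub (t : ℂ)
      have hF1 : HasDerivAt f (f' ((t : ℂ) - (u : ℂ) * Complex.I))
          ((t : ℂ) - (u : ℂ) * Complex.I) := hder _ (by rw [himz]; exact hball u hu)
      have := (HasDerivAt.comp ((u : ℝ) : ℂ) hF1 hE).comp_ofReal
      simpa [mul_comm] using this
  have hconst : ∀ y : ℝ, 0 ≤ y → G y = G 0 := by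
    intro y hy
    have h := intervalIntegral.integral_eq_sub_of_hasDerivAt (f := G)
      (f' := fun _ => (0 : ℂ)) (a := 0) (b := y)
      (fun u hu => by
        rw [Set.uIcc_of_le hy] at hu
        exact hGd u hu.1)
      intervalIntegrable_const
    simp only [intervalIntegral.integral_const, smul_zero, sub_zero] at h
    exact sub_eq_zero.mp h.symm
  have hdecay : Tendsto G atTop (𝓝 0) := by
    set q : ℝ := (p + 1) / 2 with hq
    have hq1 : 1 < q := by rw [hq]; linarith
    have hr0 : 0 < p - q := by rw [hq]; linarith
    set C : ℝ := K₀ * ∫ t : ℝ, (1 + |t|) ^ (-q) with hC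
    refine squeeze_zero_norm' ?_ (cbv_tendsto_aux (K := C) hr0)
    filter_upwards [eventually_ge_atTop (0 : ℝ)] with y hy
    have hyδ : -y ≤ δ := by linarith
    calc ‖G y‖ ≤ ∫ t : ℝ, ‖f ((t : ℂ) - (y : ℂ) * Complex.I)‖ := by
          rw [hGdef]
          exact norm_integral_le_integral_norm _
      _ ≤ ∫ t : ℝ, (K₀ * (1 + |y|) ^ (-(p - q))) * (1 + |t|) ^ (-q) := by
          apply integral_mono (hfint y hyδ).norm (((cbv_integrable_aux hq1).const_mul _))
          intro t
          show ‖f ((t : ℂ) - (y : ℂ) * Complex.I)‖ ≤ (K₀ * (1 + |y|) ^ (-(p - q))) * (1 + |t|) ^ (-q)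
          have hz1 : (0:ℝ) < 1 + ‖(t : ℂ) - (y : ℂ) * Complex.I‖ := by positivity
          have h1t : 1 + |t| ≤ 1 + ‖(t : ℂ) - (y : ℂ) * Complex.I‖ := by
            have := Complex.abs_re_le_norm ((t : ℂ) - (y : ℂ) * Complex.I)
            simp only [Complex.sub_re, Complex.ofReal_re, Complex.mul_re, Complex.I_re,
              Complex.I_im, Complex.ofReal_im] at this
            simp at this ⊢
            linarith [this]
          have h1y : 1 + |y| ≤ 1 + ‖(t : ℂ) - (y : ℂ) * Complex.I‖ := by
            have := Complex.abs_im_le_norm ((t : ℂ) - (y : ℂ) * Complex.I)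
            rw [himz] at this
            rw [abs_neg] at this
            linarith
          calc ‖f ((t : ℂ) - (y : ℂ) * Complex.I)‖
              ≤ K₀ * (1 + ‖(t : ℂ) - (y : ℂ) * Complex.I‖) ^ (-p) :=
                hfb _ (by rw [himz]; exact hyδ)
            _ = K₀ * ((1 + ‖(t : ℂ) - (y : ℂ) * Complex.I‖) ^ (-(p - q)) *
                  (1 + ‖(t : ℂ) - (y : ℂ) * Complex.I‖) ^ (-q)) := by
                rw [← Real.rpow_add hz1]
                ring_nf
            _ ≤ K₀ * ((1 + |y|) ^ (-(p - q)) * (1 + |t|) ^ (-q)) := by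
                apply mul_le_mul_of_nonneg_left _ hK₀
                apply mul_le_mul
                · exact Real.rpow_le_rpow_of_nonpos (by positivity) h1y (by linarith)
                · exact Real.rpow_le_rpow_of_nonpos (by positivity) h1t (by linarith)
                · exact Real.rpow_nonneg (by positivity) _
                · exact Real.rpow_nonneg (by positivity) _
            _ = (K₀ * (1 + |y|) ^ (-(p - q))) * (1 + |t|) ^ (-q) := by ring
      _ = C * (1 + |y|) ^ (-(p - q)) := by
          rw [integral_const_mul, hC]
          ring
  have hlim : Tendsto G atTop (𝓝 (G 0)) :=
    Tendsto.congr' ((eventually_ge_atTop (0:ℝ)).mono fun y hy => (hconst y hy).symm)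
      tendsto_const_nhds
  have hG0 : G 0 = 0 := tendsto_nhds_unique hlim hdecay
  rw [← hG0, hGdef]
  norm_num [hfdef]
end

section
/- For real ν > 0 and t > 0, the modified Bessel function of the second kind satisfies Basset's integral: K_ν(t) = π^{-1/2} Γ(ν+1/2) (2/t)^ν ∫₀^∞ (1+x²)^{-(ν+1/2)} cos(tx) dx. -/
open MeasureTheory

/-- The modified Bessel function of the second kind `K_ν(t)`, via its standard
integral representation for `t > 0`. -/
noncomputable def besselK (ν t : ℝ) : ℝ :=
  ∫ u in Set.Ioi (0:ℝ), Real.exp (-t * Real.cosh u) * Real.cosh (ν * u)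

open Real Set

lemma gauss_cos {s t : ℝ} (hs : 0 < s) :
    ∫ x : ℝ, Real.exp (-s * x^2) * Real.cos (t * x)
      = Real.sqrt (π / s) * Real.exp (-t^2 / (4*s)) := by
  have hb : ((-s : ℂ)).re < 0 := by simpa using hs
  have hint := integrable_cexp_quadratic' hb ((t:ℂ) * Complex.I) 0
  have h := integral_cexp_quadratic hb ((t:ℂ) * Complex.I) 0
  have hre := integral_re hint
  rw [h] at hre
  simp only [RCLike.re_to_complex] at hre
  have hlhs : ∀ x : ℝ, ((Complex.exp ((-s:ℂ) * (x:ℂ)^2 + (t:ℂ) * Complex.I * (x:ℂ) + 0)).re)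
      = Real.exp (-s * x^2) * Real.cos (t * x) := by
    intro x
    rw [Complex.exp_re]
    norm_num
    have h1 : ((x:ℂ) ^ 2).re = x ^ 2 := by norm_cast
    have h2 : ((x:ℂ) ^ 2).im = 0 := by
      have : ((x:ℂ) ^ 2) = ((x^2 : ℝ) : ℂ) := by push_cast; ring
      rw [this, Complex.ofReal_im]
    rw [h1, h2]
    norm_num
  rw [integral_congr_ae (Filter.Eventually.of_forall hlhs)] at hre
  rw [hre]
  have h1 : (↑π / -(-s:ℂ)) = ((π / s : ℝ) : ℂ) := by push_cast; ring
  have h2 : ((0:ℂ) - ((t:ℂ) * Complex.I)^2 / (4 * (-s:ℂ))) = ((-t^2/(4*s) : ℝ) : ℂ) := by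
    push_cast
    field_simp
    ring_nf
    simp [Complex.I_sq]
  rw [h1, h2]
  rw [show ((1:ℂ)/2) = ((1/2 : ℝ) : ℂ) by norm_num]
  rw [← Complex.ofReal_cpow (by positivity), ← Complex.ofReal_exp, ← Complex.ofReal_mul,
    Complex.ofReal_re]
  rw [← Real.sqrt_eq_rpow]

lemma range_cexp {c : ℝ} (hc : 0 < c) : Set.range (fun u : ℝ => c * Real.exp u) = Set.Ioi 0 := by
  ext x
  constructor
  · rintro ⟨u, rfl⟩; exact mul_pos hc (Real.exp_pos u)
  · intro hx
    refine ⟨Real.log (x / c), ?_⟩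
    show c * Real.exp (Real.log (x / c)) = x
    rw [Real.exp_log (div_pos hx hc)]; field_simp

lemma cov_exp {c : ℝ} (hc : 0 < c) (g : ℝ → ℝ) :
    ∫ s in Set.Ioi (0:ℝ), g s = ∫ u : ℝ, (c * Real.exp u) * g (c * Real.exp u) := by
  have hderiv : ∀ u ∈ (Set.univ : Set ℝ), HasDerivWithinAt (fun u => c * Real.exp u)
      (c * Real.exp u) Set.univ u :=
    fun u _ => ((Real.hasDerivAt_exp u).const_mul c).hasDerivWithinAt
  have hinj : Set.InjOn (fun u : ℝ => c * Real.exp u) Set.univ := by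
    intro a _ b _ h
    simpa [hc.ne', Real.exp_eq_exp] using h
  have := integral_image_eq_integral_abs_deriv_smul MeasurableSet.univ hderiv hinj g
  rw [Set.image_univ, range_cexp hc] at this
  rw [this, setIntegral_univ]
  refine integral_congr_ae (Filter.Eventually.of_forall fun u => ?_)
  simp [abs_of_pos (mul_pos hc (Real.exp_pos u))]

lemma cov_exp_int {c : ℝ} (hc : 0 < c) (g : ℝ → ℝ) (hg : IntegrableOn g (Set.Ioi 0)) :
    Integrable (fun u : ℝ => (c * Real.exp u) * g (c * Real.exp u)) := by
  have hderiv : ∀ u ∈ (Set.univ : Set ℝ), HasDerivWithinAt (fun u => c * Real.exp u)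
      (c * Real.exp u) Set.univ u :=
    fun u _ => ((Real.hasDerivAt_exp u).const_mul c).hasDerivWithinAt
  have hinj : Set.InjOn (fun u : ℝ => c * Real.exp u) Set.univ := by
    intro a _ b _ h
    simpa [hc.ne', Real.exp_eq_exp] using h
  have := (integrableOn_image_iff_integrableOn_abs_deriv_smul MeasurableSet.univ hderiv hinj g).mp
  rw [Set.image_univ, range_cexp hc] at this
  have h2 := this hg
  rw [integrableOn_univ] at h2
  refine h2.congr (Filter.Eventually.of_forall fun u => ?_)
  simp [abs_of_pos (mul_pos hc (Real.exp_pos u))]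

lemma G_int {ν t : ℝ} (hν : 0 < ν) :
    IntegrableOn (fun s => s ^ (ν - 1) * Real.exp (-s - t^2/(4*s))) (Set.Ioi (0:ℝ)) := by
  refine Integrable.mono' (Real.GammaIntegral_convergent hν) ?_ ?_
  · apply Measurable.aestronglyMeasurable
    fun_prop
  · filter_upwards [self_mem_ae_restrict measurableSet_Ioi] with s hs
    have hs' : (0:ℝ) < s := hs
    have h1 : (0:ℝ) ≤ t^2/(4*s) := by positivity
    rw [Real.norm_eq_abs, abs_of_nonneg (by positivity)]
    rw [mul_comm]
    gcongr
    linarith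

lemma besselK_eq {ν t : ℝ} (hν : 0 < ν) (ht : 0 < t) :
    besselK ν t = (1/2) * (2/t) ^ ν *
      ∫ s in Set.Ioi (0:ℝ), s ^ (ν - 1) * Real.exp (-s - t^2/(4*s)) := by
  have hc : (0:ℝ) < t/2 := by linarith
  set G : ℝ → ℝ := fun s => s ^ (ν - 1) * Real.exp (-s - t^2/(4*s)) with hG
  set A : ℝ → ℝ := fun u => Real.exp (-t * Real.cosh u) * Real.exp (ν * u) with hAdef
  have hA : ∀ u : ℝ, (t/2 * Real.exp u) * G (t/2 * Real.exp u) = (t/2) ^ ν * A u := by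
    intro u
    have hs : (0:ℝ) < t/2 * Real.exp u := by positivity
    have e1 : -(t/2 * Real.exp u) - t^2/(4*(t/2 * Real.exp u)) = -t * Real.cosh u := by
      rw [Real.cosh_eq]
      rw [Real.exp_neg]
      field_simp
      ring
    have e2 : (t/2 * Real.exp u) * (t/2 * Real.exp u) ^ (ν - 1) = (t/2 * Real.exp u) ^ ν := by
      nth_rewrite 1 [← Real.rpow_one (t/2 * Real.exp u)]
      rw [← Real.rpow_add hs]
      norm_num
    have e3 : (t/2 * Real.exp u) ^ ν = (t/2) ^ ν * Real.exp (ν * u) := by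
      rw [Real.mul_rpow hc.le (Real.exp_pos u).le]
      congr 1
      rw [Real.rpow_def_of_pos (Real.exp_pos u), Real.log_exp, mul_comm]
    simp only [hG, hAdef]
    rw [← mul_assoc, e2, e1, e3]
    ring
  have hGint : IntegrableOn G (Set.Ioi (0:ℝ)) := G_int hν
  have hIeq : ∫ s in Set.Ioi (0:ℝ), G s = (t/2) ^ ν * ∫ u : ℝ, A u := by
    rw [cov_exp hc G, ← integral_const_mul]
    exact integral_congr_ae (Filter.Eventually.of_forall hA)
  have hAint : Integrable A := by
    have h := cov_exp_int hc G hGint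
    have h2 : Integrable (fun u => (t/2) ^ ν * A u) :=
      h.congr (Filter.Eventually.of_forall hA)
    have := h2.const_mul ((t/2 : ℝ) ^ ν)⁻¹
    refine this.congr (Filter.Eventually.of_forall fun u => ?_)
    field_simp
  have hAnegint : Integrable (fun u => A (-u)) := hAint.comp_neg
  -- evenness
  have h2K : 2 * besselK ν t = ∫ u : ℝ, Real.exp (-t * Real.cosh u) * Real.cosh (ν * u) := by
    rw [besselK, ← integral_comp_abs (f := fun u => Real.exp (-t * Real.cosh u) * Real.cosh (ν * u))]
    refine integral_congr_ae (Filter.Eventually.of_forall fun u => ?_)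
    show Real.exp (-t * Real.cosh |u|) * Real.cosh (ν * |u|)
      = Real.exp (-t * Real.cosh u) * Real.cosh (ν * u)
    rw [Real.cosh_abs, show ν * |u| = |ν * u| by rw [abs_mul, abs_of_pos hν], Real.cosh_abs]
  have h3 : (∫ u : ℝ, Real.exp (-t * Real.cosh u) * Real.cosh (ν * u)) = ∫ u : ℝ, A u := by
    have heq : ∀ u : ℝ, Real.exp (-t * Real.cosh u) * Real.cosh (ν * u)
        = (A u + A (-u)) / 2 := by
      intro u
      simp only [hAdef, Real.cosh_neg, mul_neg]
      rw [Real.cosh_eq (ν * u)]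
      ring
    rw [integral_congr_ae (Filter.Eventually.of_forall heq)]
    rw [integral_div, integral_add hAint hAnegint, integral_neg_eq_self A]
    ring
  have hpow : (2/t : ℝ) ^ ν = ((t/2 : ℝ) ^ ν)⁻¹ := by
    rw [show (2/t : ℝ) = (t/2)⁻¹ by rw [inv_div], Real.inv_rpow hc.le]
  have hne : ((t/2 : ℝ) ^ ν) ≠ 0 := (Real.rpow_pos_of_pos hc ν).ne'
  rw [hIeq, hpow]
  rw [h3] at h2K
  have expand : (1/2 : ℝ) * ((t/2 : ℝ) ^ ν)⁻¹ * ((t/2 : ℝ) ^ ν * ∫ u : ℝ, A u)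
      = (1/2) * ∫ u : ℝ, A u := by
    rw [mul_assoc, ← mul_assoc (((t/2 : ℝ)) ^ ν)⁻¹, inv_mul_cancel₀ hne, one_mul]
  rw [expand]
  linarith

lemma half_gauss_cos {s t : ℝ} (hs : 0 < s) :
    ∫ x in Set.Ioi (0:ℝ), Real.exp (-s * x^2) * Real.cos (t * x)
      = (1/2) * (Real.sqrt (π / s) * Real.exp (-t^2 / (4*s))) := by
  have h := integral_comp_abs (f := fun x => Real.exp (-s * x^2) * Real.cos (t * x))
  have heq : ∀ x : ℝ, Real.exp (-s * |x|^2) * Real.cos (t * |x|)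
      = Real.exp (-s * x^2) * Real.cos (t * x) := by
    intro x
    rcases abs_choice x with hx | hx <;> rw [hx] <;> simp [neg_sq, mul_neg, Real.cos_neg]
  rw [integral_congr_ae (Filter.Eventually.of_forall heq), gauss_cos hs] at h
  linarith

lemma slice_bound {a s t : ℝ} (hs : 0 < s) (x : ℝ) :
    ‖s ^ (a-1) * Real.exp (-((1+x^2)*s)) * Real.cos (t*x)‖
      ≤ s ^ (a-1) * Real.exp (-s) * Real.exp (-s * x^2) := by
  have key : Real.exp (-((1+x^2)*s)) = Real.exp (-s) * Real.exp (-s * x^2) := by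
    rw [← Real.exp_add]; ring_nf
  rw [Real.norm_eq_abs, abs_mul, abs_mul,
    abs_of_nonneg (Real.rpow_pos_of_pos hs _).le, abs_of_nonneg (Real.exp_pos _).le]
  calc s ^ (a-1) * Real.exp (-((1+x^2)*s)) * |Real.cos (t*x)|
      ≤ s ^ (a-1) * Real.exp (-((1+x^2)*s)) * 1 := by
        gcongr
        exact Real.abs_cos_le_one _
    _ = s ^ (a-1) * Real.exp (-s) * Real.exp (-s * x^2) := by rw [mul_one, key]; ring

lemma slice_int {a s t : ℝ} (hs : 0 < s) :
    IntegrableOn (fun x => s ^ (a-1) * Real.exp (-((1+x^2)*s)) * Real.cos (t*x))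
      (Set.Ioi (0:ℝ)) := by
  have hdom : IntegrableOn (fun x => s ^ (a-1) * Real.exp (-s) * Real.exp (-s * x^2))
      (Set.Ioi (0:ℝ)) := ((integrable_exp_neg_mul_sq hs).integrableOn).const_mul _
  refine hdom.mono' ?_ ?_
  · apply Measurable.aestronglyMeasurable
    fun_prop
  · exact Filter.Eventually.of_forall fun x => slice_bound hs x

lemma prod_int {ν t : ℝ} (hν : 0 < ν) :
    Integrable (Function.uncurry fun s x : ℝ =>
        s ^ (ν + 1/2 - 1) * Real.exp (-((1+x^2)*s)) * Real.cos (t*x))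
      ((volume.restrict (Set.Ioi 0)).prod (volume.restrict (Set.Ioi 0))) := by
  have hm : AEStronglyMeasurable (Function.uncurry fun s x : ℝ =>
        s ^ (ν + 1/2 - 1) * Real.exp (-((1+x^2)*s)) * Real.cos (t*x))
      ((volume.restrict (Set.Ioi 0)).prod (volume.restrict (Set.Ioi 0))) := by
    apply Measurable.aestronglyMeasurable
    show Measurable fun p : ℝ × ℝ =>
      p.1 ^ (ν + 1/2 - 1) * Real.exp (-((1+p.2^2)*p.1)) * Real.cos (t*p.2)
    fun_prop
  rw [integrable_prod_iff hm]
  constructor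
  · filter_upwards [self_mem_ae_restrict measurableSet_Ioi] with s hs
    exact slice_int hs
  · have hdom : Integrable (fun s => Real.sqrt π * (Real.exp (-s) * s ^ (ν-1)))
        (volume.restrict (Set.Ioi 0)) := (Real.GammaIntegral_convergent hν).const_mul _
    refine hdom.mono' hm.norm.integral_prod_right' ?_
    filter_upwards [self_mem_ae_restrict measurableSet_Ioi] with s hs
    have hs' : (0:ℝ) < s := hs
    rw [Real.norm_eq_abs, abs_of_nonneg (integral_nonneg fun x => norm_nonneg _)]
    calc (∫ x in Set.Ioi (0:ℝ), ‖s ^ (ν + 1/2 - 1) * Real.exp (-((1+x^2)*s)) * Real.cos (t*x)‖)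
        ≤ ∫ x in Set.Ioi (0:ℝ), s ^ (ν + 1/2 - 1) * Real.exp (-s) * Real.exp (-s*x^2) := by
          refine integral_mono_ae ((slice_int hs').norm)
            (((integrable_exp_neg_mul_sq hs').integrableOn).const_mul _) ?_
          exact Filter.Eventually.of_forall fun x => slice_bound hs' x
      _ = s ^ (ν + 1/2 - 1) * Real.exp (-s) * ∫ x in Set.Ioi (0:ℝ), Real.exp (-s*x^2) := by
          rw [integral_const_mul]
      _ ≤ s ^ (ν + 1/2 - 1) * Real.exp (-s) * Real.sqrt (π/s) := by
          gcongr
          have h1 : (∫ x in Set.Ioi (0:ℝ), Real.exp (-s*x^2)) ≤ ∫ x : ℝ, Real.exp (-s*x^2) :=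
            setIntegral_le_integral (integrable_exp_neg_mul_sq hs')
              (Filter.Eventually.of_forall fun x => (Real.exp_pos _).le)
          rwa [integral_gaussian] at h1
      _ = Real.sqrt π * (Real.exp (-s) * s ^ (ν-1)) := by
          rw [Real.sqrt_div pi_pos.le]
          have h2 : s ^ (ν + 1/2 - 1) / Real.sqrt s = s ^ (ν-1) := by
            rw [Real.sqrt_eq_rpow, div_eq_mul_inv, ← Real.rpow_neg hs'.le,
              ← Real.rpow_add hs']
            congr 1
            ring
          rw [← h2]
          field_simp

lemma rhs_eq {ν t : ℝ} (hν : 0 < ν) (ht : 0 < t) :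
    (∫ x in Set.Ioi (0:ℝ), (1 + x^2) ^ (-(ν+1/2)) * Real.cos (t*x))
      = (Real.Gamma (ν+1/2))⁻¹ * (Real.sqrt π / 2) *
        ∫ s in Set.Ioi (0:ℝ), s ^ (ν-1) * Real.exp (-s - t^2/(4*s)) := by
  have ha : (0:ℝ) < ν + 1/2 := by linarith
  have hΓ : Real.Gamma (ν+1/2) ≠ 0 := (Real.Gamma_pos_of_pos ha).ne'
  have P1 : ∀ x : ℝ, (1 + x^2) ^ (-(ν+1/2)) * Real.cos (t*x)
      = (Real.Gamma (ν+1/2))⁻¹ *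
        ∫ s in Set.Ioi (0:ℝ), s ^ (ν+1/2-1) * Real.exp (-((1+x^2)*s)) * Real.cos (t*x) := by
    intro x
    have hr : (0:ℝ) < 1 + x^2 := by positivity
    rw [integral_mul_const, integral_rpow_mul_exp_neg_mul_Ioi ha hr]
    rw [show (1/(1+x^2) : ℝ) = (1+x^2)⁻¹ from one_div _, Real.inv_rpow hr.le,
      ← Real.rpow_neg hr.le]
    field_simp
  rw [setIntegral_congr_fun measurableSet_Ioi (fun x _ => P1 x), integral_const_mul]
  have hswap := integral_integral_swap
    (f := fun s x => s ^ (ν+1/2-1) * Real.exp (-((1+x^2)*s)) * Real.cos (t*x)) (prod_int hν)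
  rw [← hswap]
  have hinner : ∀ s ∈ Set.Ioi (0:ℝ),
      (∫ x in Set.Ioi (0:ℝ), s^(ν+1/2-1) * Real.exp (-((1+x^2)*s)) * Real.cos (t*x))
        = (Real.sqrt π / 2) * (s ^ (ν-1) * Real.exp (-s - t^2/(4*s))) := by
    intro s hs
    have hs' : (0:ℝ) < s := hs
    have hsplit : ∀ x : ℝ, s^(ν+1/2-1) * Real.exp (-((1+x^2)*s)) * Real.cos (t*x)
        = (s^(ν+1/2-1) * Real.exp (-s)) * (Real.exp (-s*x^2) * Real.cos (t*x)) := by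
      intro x
      rw [show Real.exp (-((1+x^2)*s)) = Real.exp (-s) * Real.exp (-s*x^2) from by
        rw [← Real.exp_add]; ring_nf]
      ring
    rw [setIntegral_congr_fun measurableSet_Ioi (fun x _ => hsplit x), integral_const_mul,
      half_gauss_cos hs']
    have h2 : s ^ (ν + 1/2 - 1) / Real.sqrt s = s ^ (ν-1) := by
      rw [Real.sqrt_eq_rpow, div_eq_mul_inv, ← Real.rpow_neg hs'.le, ← Real.rpow_add hs']
      congr 1
      ring
    rw [Real.sqrt_div pi_pos.le,
      show Real.exp (-s - t^2/(4*s)) = Real.exp (-s) * Real.exp (-t^2/(4*s)) from by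
        rw [← Real.exp_add]; ring_nf]
    rw [← h2]
    have hsqs : Real.sqrt s ≠ 0 := (Real.sqrt_pos.mpr hs').ne'
    field_simp
  rw [setIntegral_congr_fun measurableSet_Ioi hinner, integral_const_mul]
  ring

theorem basset_integral (ν t : ℝ) (hν : 0 < ν) (ht : 0 < t) :
    besselK ν t =
      Real.pi ^ (-(1/2 : ℝ)) * Real.Gamma (ν + 1/2) * (2 / t) ^ ν *
        ∫ x in Set.Ioi (0:ℝ), (1 + x ^ 2) ^ (-(ν + 1/2)) * Real.cos (t * x) := by
  rw [besselK_eq hν ht, rhs_eq hν ht]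
  have hΓ : Real.Gamma (ν + 1/2) ≠ 0 := (Real.Gamma_pos_of_pos (by linarith)).ne'
  have h1 : Real.pi ^ (-(1/2 : ℝ)) = (Real.sqrt π)⁻¹ := by
    rw [Real.rpow_neg pi_pos.le, Real.sqrt_eq_rpow]
  have hsq : Real.sqrt π ≠ 0 := (Real.sqrt_pos.mpr pi_pos).ne'
  rw [h1]
  field_simp
  ring
  congr 1
  funext s
  ring
end

section
/- For real ν > 0, the Fourier transform of f_ν(x) = (1+x²)^{-(ν+1/2)}/B(ν,1/2) is f̂_ν(t) = |t|^ν K_ν(|t|)/(2^{ν−1}Γ(ν)) for t ≠ 0, and f̂_ν(0) = 1. -/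
open MeasureTheory Complex

/-- The classical Beta function. -/
noncomputable def betaFn (a b : ℝ) : ℝ := Real.Gamma a * Real.Gamma b / Real.Gamma (a + b)

open Set

lemma intOn_gammaKernel {a r : ℝ} (ha : 0 < a) (hr : 0 < r) :
    IntegrableOn (fun u : ℝ => u ^ (a - 1) * Real.exp (-(r * u))) (Ioi 0) := by
  have h := Real.GammaIntegral_convergent ha
  have h2 : IntegrableOn (fun u : ℝ => Real.exp (-(r*u)) * (r*u) ^ (a - 1)) (Ioi 0) := by
    have := (integrableOn_Ioi_comp_mul_left_iff
      (fun x : ℝ => Real.exp (-x) * x ^ (a-1)) 0 hr).mpr (by simpa using h)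
    simpa using this
  have h3 := h2.const_mul ((r : ℝ) ^ (a-1))⁻¹
  apply IntegrableOn.congr_fun h3 ?_ measurableSet_Ioi
  intro u hu
  simp only []
  rw [Real.mul_rpow hr.le (le_of_lt hu)]
  field_simp [(Real.rpow_pos_of_pos hr (a-1)).ne']

lemma integrable_one_add_sq_rpow {s : ℝ} (hs : 1/2 < s) :
    Integrable (fun x : ℝ => (1 + x ^ 2) ^ (-s)) := by
  have hcont : Continuous fun x : ℝ => (1 + x ^ 2) ^ (-s) := by
    apply Continuous.rpow_const (by continuity)
    intro x; left; positivity
  have hIoi : IntegrableOn (fun x : ℝ => (1 + x ^ 2) ^ (-s)) (Ioi 0) := by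
    have h1 : IntegrableOn (fun x : ℝ => (1 + x ^ 2) ^ (-s)) (Ioc 0 1) :=
      hcont.continuousOn.integrableOn_compact isCompact_Icc |>.mono_set Ioc_subset_Icc_self
    have h2 : IntegrableOn (fun x : ℝ => (1 + x ^ 2) ^ (-s)) (Ioi 1) := by
      have hbound : IntegrableOn (fun x : ℝ => x ^ (-(2*s))) (Ioi 1) :=
        (integrableOn_Ioi_rpow_iff one_pos).mpr (by linarith)
      apply hbound.mono' hcont.aestronglyMeasurable.restrict
      filter_upwards [ae_restrict_mem measurableSet_Ioi] with x hx
      have hx1 : (1:ℝ) < x := hx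
      have hx0 : (0:ℝ) < x := by linarith
      rw [Real.norm_eq_abs, _root_.abs_of_nonneg (by positivity)]
      have : x ^ (-(2*s)) = (x ^ 2) ^ (-s) := by
        rw [← Real.rpow_natCast x 2, ← Real.rpow_mul hx0.le]
        ring_nf
      rw [this]
      rw [Real.rpow_neg (by positivity), Real.rpow_neg (by positivity)]
      apply inv_anti₀ (by positivity)
      exact Real.rpow_le_rpow (by positivity) (by nlinarith) (by linarith)
    have := h1.union h2
    rwa [Ioc_union_Ioi_eq_Ioi one_pos.le] at this
  have hIic : IntegrableOn (fun x : ℝ => (1 + x ^ 2) ^ (-s)) (Iic 0) := by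
    have m : MeasurableEmbedding (Neg.neg : ℝ → ℝ) :=
      (Homeomorph.neg ℝ).measurableEmbedding
    rw [← Measure.map_neg_eq_self (volume : Measure ℝ), IntegrableOn,
      Measure.restrict_map m.measurable measurableSet_Iic, m.integrable_map_iff]
    have hset : Neg.neg ⁻¹' (Iic (0:ℝ)) = Ici 0 := by ext x; simp
    rw [hset]
    have h0 : IntegrableOn (fun x : ℝ => (1 + x ^ 2) ^ (-s)) (Ici 0) := by
      rw [integrableOn_Ici_iff_integrableOn_Ioi]; exact hIoi
    exact h0.congr_fun (fun x _ => by simp [Function.comp, neg_pow]) measurableSet_Ici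
  have := hIic.union hIoi
  rwa [Iic_union_Ioi, integrableOn_univ] at this

lemma bessel_sub {ν c : ℝ} (hν : 0 < ν) (hc : 0 < c) :
    ∫ u in Ioi (0:ℝ), u ^ (ν - 1) * Real.exp (-(u + c^2/(4*u))) =
      2 * (c/2) ^ ν * besselK ν c := by
  set g : ℝ → ℝ := fun u => u ^ (ν - 1) * Real.exp (-(u + c^2/(4*u))) with hg
  have hc2 : (0:ℝ) < c/2 := by linarith
  -- change of variables u = (c/2) * exp w
  have himg : (fun w : ℝ => c/2 * Real.exp w) '' univ = Ioi 0 := by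
    rw [image_univ]
    ext y
    constructor
    · rintro ⟨w, rfl⟩; exact mul_pos hc2 (Real.exp_pos w)
    · intro hy
      have hy' : (0:ℝ) < y := hy
      refine ⟨Real.log (y / (c/2)), ?_⟩
      simp only []
      rw [Real.exp_log (by positivity)]
      field_simp
  have hderiv : ∀ x ∈ (univ : Set ℝ),
      HasDerivWithinAt (fun w : ℝ => c/2 * Real.exp w) (c/2 * Real.exp x) univ x :=
    fun x _ => ((Real.hasDerivAt_exp x).const_mul (c/2)).hasDerivWithinAt
  have hinj : InjOn (fun w : ℝ => c/2 * Real.exp w) univ := by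
    intro a _ b _ h
    exact Real.exp_injective (mul_left_cancel₀ hc2.ne' h)
  have hcv := integral_image_eq_integral_abs_deriv_smul MeasurableSet.univ hderiv hinj g
  rw [himg] at hcv
  -- simplify the substituted integrand
  have hsubst : ∀ w : ℝ, |c/2 * Real.exp w| • g (c/2 * Real.exp w) =
      (c/2) ^ ν * (Real.exp (ν * w) * Real.exp (-(c * Real.cosh w))) := by
    intro w
    have he : (0:ℝ) < Real.exp w := Real.exp_pos w
    have h1 : (c/2 * Real.exp w) ^ (ν - 1)
        = (c/2) ^ (ν-1) * Real.exp ((ν-1) * w) := by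
      rw [Real.mul_rpow hc2.le he.le, Real.rpow_def_of_pos he, Real.log_exp]
      ring_nf
    have h2 : c/2 * Real.exp w + c^2/(4*(c/2 * Real.exp w)) = c * Real.cosh w := by
      rw [Real.cosh_eq, Real.exp_neg]
      field_simp
      ring
    have h3 : (c/2) ^ ν = (c/2) ^ (ν-1) * (c/2) := by
      have := Real.rpow_add hc2 (ν-1) 1
      rw [Real.rpow_one] at this
      simpa using this
    rw [smul_eq_mul, _root_.abs_of_nonneg (by positivity), hg]
    simp only []
    rw [h1, h2, h3, show (ν-1)*w = ν*w - w by ring, Real.exp_sub]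
    field_simp
  rw [hcv, setIntegral_univ]
  simp_rw [hsubst]
  rw [MeasureTheory.integral_const_mul]
  -- now compute ∫ w : ℝ, exp (ν w) * exp (-c cosh w)
  set h : ℝ → ℝ := fun w => Real.exp (ν * w) * Real.exp (-(c * Real.cosh w)) with hh
  -- integrability of h
  have hgint : IntegrableOn g (Ioi 0) := by
    apply (intOn_gammaKernel hν one_pos).mono'
    · have hgc : ContinuousOn g (Ioi 0) := by
        apply ContinuousOn.mul
        · exact fun x hx => (Real.continuousAt_rpow_const x _ (Or.inl (ne_of_gt hx))).continuousWithinAt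
        · apply Real.continuous_exp.comp_continuousOn
          apply ContinuousOn.neg
          apply continuousOn_id.add
          exact continuousOn_const.div (by fun_prop) (fun x hx => by have hx0 : (0:ℝ) < x := hx; positivity)
      exact (hgc.aestronglyMeasurable measurableSet_Ioi)
    · filter_upwards [ae_restrict_mem measurableSet_Ioi] with u hu
      have hu0 : (0:ℝ) < u := hu
      simp only [hg, Real.norm_eq_abs, one_mul]
      rw [_root_.abs_of_nonneg (mul_nonneg (Real.rpow_nonneg hu0.le _) (Real.exp_nonneg _))]
      apply mul_le_mul_of_nonneg_left ?_ (by positivity)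
      apply Real.exp_le_exp.mpr
      have : 0 ≤ c^2/(4*u) := by positivity
      linarith
  have hint : Integrable h := by
    have := (integrableOn_image_iff_integrableOn_abs_deriv_smul
      MeasurableSet.univ hderiv hinj g).mp (by rwa [himg])
    rw [integrableOn_univ] at this
    have h2 : Integrable (fun w => (c/2) ^ ν * h w) := this.congr (by
      filter_upwards with w; exact (hsubst w))
    have := h2.const_mul ((c/2) ^ ν)⁻¹
    apply this.congr
    filter_upwards with w
    field_simp [(Real.rpow_pos_of_pos hc2 ν).ne']
  have hsplit := intervalIntegral.integral_Iic_add_Ioi (b := (0:ℝ)) hint.integrableOn hint.integrableOn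
  have hneg : ∫ w in Iic (0:ℝ), h w = ∫ w in Ioi (0:ℝ), h (-w) := by
    have := integral_comp_neg_Iic (0:ℝ) (fun x => h (-x))
    simpa using this
  have hhn : IntegrableOn (fun w => h (-w)) (Ioi 0) := by
    apply hint.integrableOn.mono' ?_
    · filter_upwards [ae_restrict_mem measurableSet_Ioi] with w hw
      have hw0 : (0:ℝ) < w := hw
      rw [hh, Real.norm_eq_abs]
      simp only []
      rw [_root_.abs_of_nonneg (by positivity), Real.cosh_neg]
      apply mul_le_mul_of_nonneg_right ?_ (by positivity)
      apply Real.exp_le_exp.mpr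
      nlinarith
    · apply (Continuous.aestronglyMeasurable (by continuity)).restrict
  have hbessel : (∫ w in Ioi (0:ℝ), h (-w)) + (∫ w in Ioi (0:ℝ), h w)
      = 2 * besselK ν c := by
    rw [← integral_add hhn hint.integrableOn, besselK, ← MeasureTheory.integral_const_mul]
    apply setIntegral_congr_fun measurableSet_Ioi
    intro w _
    simp only [hh]
    rw [show ν * (-w) = -(ν*w) by ring, Real.cosh_neg, Real.cosh_eq (ν*w),
      show -c * Real.cosh w = -(c * Real.cosh w) by ring]
    ring
  have : ∫ w : ℝ, h w = 2 * besselK ν c := by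
    rw [← hsplit, hneg, hbessel]
  rw [this]
  ring

lemma myIntegral_ofReal {α} [MeasurableSpace α] (μ : MeasureTheory.Measure α) (f : α → ℝ) :
    ∫ x, (f x : ℂ) ∂μ = ((∫ x, f x ∂μ : ℝ) : ℂ) := integral_ofReal


lemma key_fubini (ν : ℝ) (hν : 0 < ν) (t : ℝ) :
    (∫ x : ℝ, Complex.exp (-(Complex.I * t * x)) * (((1 + x ^ 2) ^ (-(ν + 1/2)) : ℝ) : ℂ)) =
      (((Real.sqrt Real.pi / Real.Gamma (ν + 1/2)) *
        ∫ u in Ioi (0:ℝ), u ^ (ν - 1) * Real.exp (-(u + t^2/(4*u))) : ℝ) : ℂ) := by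
  set s : ℝ := ν + 1/2 with hsdef
  have hs : 0 < s := by simp [hsdef]; linarith
  have hs' : (1:ℝ)/2 < s := by simp [hsdef]; linarith
  -- subordination identity
  have hsub : ∀ x : ℝ, ((1 + x ^ 2) ^ (-s) : ℝ) =
      (Real.Gamma s)⁻¹ * ∫ u in Ioi (0:ℝ), u ^ (s-1) * Real.exp (-((1+x^2)*u)) := by
    intro x
    have hr : (0:ℝ) < 1 + x^2 := by positivity
    rw [Real.integral_rpow_mul_exp_neg_mul_Ioi hs hr]
    rw [Real.div_rpow zero_le_one hr.le, Real.one_rpow, Real.rpow_neg hr.le]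
    field_simp [(Real.Gamma_pos_of_pos hs).ne']
  set G : ℝ → ℝ → ℂ := fun x u => Complex.exp (-(Complex.I * t * x)) *
      ((u ^ (s-1) * Real.exp (-((1+x^2)*u)) : ℝ) : ℂ) with hG
  have hmeas : AEStronglyMeasurable (Function.uncurry G)
      ((volume : Measure ℝ).prod ((volume : Measure ℝ).restrict (Ioi 0))) := by
    apply Measurable.aestronglyMeasurable
    apply Measurable.mul
    · apply Complex.measurable_exp.comp
      fun_prop
    · apply Complex.measurable_ofReal.comp
      apply Measurable.mul
      · have m1 : Measurable (fun u : ℝ => u ^ (s-1)) := by fun_prop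
        exact m1.comp measurable_snd
      · fun_prop
  have hnorm : ∀ x : ℝ, ∀ u ∈ Ioi (0:ℝ),
      ‖G x u‖ = u ^ (s-1) * Real.exp (-((1+x^2)*u)) := by
    intro x u hu
    have hu0 : (0:ℝ) < u := hu
    rw [hG]
    simp only []
    rw [norm_mul, Complex.norm_exp]
    have : (-(Complex.I * t * x)).re = 0 := by simp
    rw [this, Real.exp_zero, one_mul, Complex.norm_real, Real.norm_eq_abs,
      _root_.abs_of_nonneg (mul_nonneg (Real.rpow_nonneg hu0.le _) (Real.exp_nonneg _))]
  have hslice : ∀ x : ℝ, Integrable (G x) ((volume : Measure ℝ).restrict (Ioi 0)) := by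
    intro x
    have hr : (0:ℝ) < 1 + x^2 := by positivity
    exact ((intOn_gammaKernel hs hr).ofReal).const_mul _
  have hnormint : ∀ x : ℝ, (∫ u in Ioi (0:ℝ), ‖G x u‖) = Real.Gamma s * (1+x^2)^(-s) := by
    intro x
    rw [setIntegral_congr_fun measurableSet_Ioi (hnorm x), hsub x]
    field_simp [(Real.Gamma_pos_of_pos hs).ne']
  have hGint : Integrable (Function.uncurry G)
      ((volume : Measure ℝ).prod ((volume : Measure ℝ).restrict (Ioi 0))) := by
    rw [integrable_prod_iff hmeas]
    constructor
    · exact Filter.Eventually.of_forall hslice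
    · apply Integrable.congr (((integrable_one_add_sq_rpow hs').const_mul (Real.Gamma s)))
      filter_upwards with x
      exact (hnormint x).symm
  have hswap := integral_integral_swap (f := G) hGint
  -- compute the inner x-integral via the Gaussian Fourier transform
  have hinner : ∀ u ∈ Ioi (0:ℝ), (∫ x : ℝ, G x u) =
      ((u ^ (s-1) * Real.exp (-u) * ((Real.pi/u) ^ ((1:ℝ)/2) * Real.exp (-(t^2/(4*u)))) : ℝ) : ℂ) := by
    intro u hu
    have hu0 : (0:ℝ) < u := hu
    have hre : (0:ℝ) < ((u:ℂ)).re := by simpa using hu0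
    have hgauss := fourierIntegral_gaussian (b := (u:ℂ)) hre ((-t : ℝ) : ℂ)
    have heq : ∀ x : ℝ, G x u = ((u ^ (s-1) * Real.exp (-u) : ℝ) : ℂ) *
        (Complex.exp (Complex.I * ((-t:ℝ):ℂ) * x) * Complex.exp (-(u:ℂ) * x^2)) := by
      intro x
      have l1 : G x u = ((u^(s-1) : ℝ) : ℂ) *
          Complex.exp (-(Complex.I*t*x) + ((-((1+x^2)*u) : ℝ) : ℂ)) := by
        rw [hG]
        simp only []
        rw [Complex.exp_add, ← Complex.ofReal_exp]
        push_cast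
        ring
      have e1 : -(Complex.I*(t:ℂ)*(x:ℂ)) + ((-((1+x^2)*u) : ℝ) : ℂ) =
          -(u:ℂ) + (Complex.I * ((-t:ℝ):ℂ) * x + -(u:ℂ) * (x:ℂ)^2) := by
        push_cast
        ring
      rw [l1, e1, Complex.exp_add, Complex.exp_add]
      push_cast [Complex.ofReal_exp]
      ring
    simp_rw [heq]
    rw [MeasureTheory.integral_const_mul, hgauss]
    have h1 : ((Real.pi : ℂ)/(u:ℂ)) ^ ((1:ℂ)/2) = (((Real.pi/u) ^ ((1:ℝ)/2) : ℝ) : ℂ) := by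
      rw [Complex.ofReal_cpow (by positivity : (0:ℝ) ≤ Real.pi/u)]
      push_cast
      ring_nf
    have h2 : Complex.exp (-((-t:ℝ):ℂ)^2 / (4*(u:ℂ))) = ((Real.exp (-(t^2/(4*u))) : ℝ) : ℂ) := by
      rw [Complex.ofReal_exp]
      congr 1
      have hu4 : ((u:ℂ)) ≠ 0 := Complex.ofReal_ne_zero.mpr hu0.ne'
      field_simp
      push_cast
      rw [mul_neg, mul_div_cancel₀ _ (mul_ne_zero (by norm_num) hu4), neg_sq]
    rw [h1, h2]
    push_cast
    ring
  -- put everything together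
  calc (∫ x : ℝ, Complex.exp (-(Complex.I * t * x)) * (((1 + x ^ 2) ^ (-s) : ℝ) : ℂ))
      = ∫ x : ℝ, ((Real.Gamma s : ℂ))⁻¹ * ∫ u in Ioi (0:ℝ), G x u := by
        congr 1
        funext x
        rw [hsub x, Complex.ofReal_mul, Complex.ofReal_inv]
        rw [hG]
        simp only []
        rw [MeasureTheory.integral_const_mul, myIntegral_ofReal]
        ring
    _ = ((Real.Gamma s : ℂ))⁻¹ * ∫ x : ℝ, ∫ u in Ioi (0:ℝ), G x u := by
        rw [MeasureTheory.integral_const_mul]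
    _ = ((Real.Gamma s : ℂ))⁻¹ * ∫ u in Ioi (0:ℝ), ∫ x : ℝ, G x u := by rw [hswap]
    _ = ((Real.Gamma s : ℂ))⁻¹ * ∫ u in Ioi (0:ℝ),
          ((u ^ (s-1) * Real.exp (-u) * ((Real.pi/u) ^ ((1:ℝ)/2) * Real.exp (-(t^2/(4*u)))) : ℝ) : ℂ) := by
        rw [setIntegral_congr_fun measurableSet_Ioi hinner]
    _ = ((Real.Gamma s : ℂ))⁻¹ *
          ((∫ u in Ioi (0:ℝ), u ^ (s-1) * Real.exp (-u) * ((Real.pi/u) ^ ((1:ℝ)/2) * Real.exp (-(t^2/(4*u)))) : ℝ) : ℂ) := by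
        rw [myIntegral_ofReal]
    _ = (((Real.sqrt Real.pi / Real.Gamma s) *
        ∫ u in Ioi (0:ℝ), u ^ (ν - 1) * Real.exp (-(u + t^2/(4*u))) : ℝ) : ℂ) := by
        have : (∫ u in Ioi (0:ℝ), u ^ (s-1) * Real.exp (-u) * ((Real.pi/u) ^ ((1:ℝ)/2) * Real.exp (-(t^2/(4*u)))))
            = Real.sqrt Real.pi * ∫ u in Ioi (0:ℝ), u ^ (ν - 1) * Real.exp (-(u + t^2/(4*u))) := by
          rw [← MeasureTheory.integral_const_mul]
          apply setIntegral_congr_fun measurableSet_Ioi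
          intro u hu
          have hu0 : (0:ℝ) < u := hu
          simp only []
          rw [Real.sqrt_eq_rpow, Real.div_rpow Real.pi_pos.le hu0.le]
          rw [show (u:ℝ) ^ (ν-1) = u ^ (s-1) / u ^ ((1:ℝ)/2) by
            rw [← Real.rpow_sub hu0]; congr 1; rw [hsdef]; ring]
          rw [show Real.exp (-(u + t^2/(4*u))) = Real.exp (-u) * Real.exp (-(t^2/(4*u))) by
            rw [← Real.exp_add]; congr 1; ring]
          have hne : u ^ ((1:ℝ)/2) ≠ 0 := (Real.rpow_pos_of_pos hu0 _).ne'
          field_simp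
        rw [this]
        push_cast
        ring


theorem student_density_fourier (ν : ℝ) (hν : 0 < ν) :
    (∀ t : ℝ, t ≠ 0 →
      (∫ x : ℝ, Complex.exp (-(Complex.I * t * x)) *
          (((1 + x ^ 2) ^ (-(ν + 1/2)) / betaFn ν (1/2) : ℝ) : ℂ)) =
        ((|t| ^ ν * besselK ν |t| / (2 ^ (ν - 1) * Real.Gamma ν) : ℝ) : ℂ)) ∧
    (∫ x : ℝ, (((1 + x ^ 2) ^ (-(ν + 1/2)) / betaFn ν (1/2) : ℝ) : ℂ)) = 1 := by
  have hs : 0 < ν + 1/2 := by linarith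
  have hΓν := Real.Gamma_pos_of_pos hν
  have hΓs := Real.Gamma_pos_of_pos hs
  have hπ : (0:ℝ) < Real.sqrt Real.pi := Real.sqrt_pos.mpr Real.pi_pos
  have hB : betaFn ν (1/2) = Real.Gamma ν * Real.sqrt Real.pi / Real.Gamma (ν + 1/2) := by
    rw [betaFn, Real.Gamma_one_half_eq]
  have hBpos : 0 < betaFn ν (1/2) := by rw [hB]; positivity
  constructor
  · intro t ht
    have habs : 0 < |t| := abs_pos.mpr ht
    have hKey := key_fubini ν hν t
    have hC := bessel_sub hν habs
    rw [show t^2 = |t|^2 from (_root_.sq_abs t).symm] at hKey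
    have hpull : (∫ x : ℝ, Complex.exp (-(Complex.I * t * x)) *
          (((1 + x ^ 2) ^ (-(ν + 1/2)) / betaFn ν (1/2) : ℝ) : ℂ)) =
        ((betaFn ν (1/2) : ℝ) : ℂ)⁻¹ * ∫ x : ℝ, Complex.exp (-(Complex.I * t * x)) *
          (((1 + x ^ 2) ^ (-(ν + 1/2)) : ℝ) : ℂ) := by
      rw [← MeasureTheory.integral_const_mul]
      congr 1; funext x; push_cast; ring
    rw [hpull, hKey, hC]
    have hreal : (betaFn ν (1/2))⁻¹ * (Real.sqrt Real.pi / Real.Gamma (ν + 1/2) *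
        (2 * (|t|/2) ^ ν * besselK ν |t|)) =
        |t| ^ ν * besselK ν |t| / (2 ^ (ν - 1) * Real.Gamma ν) := by
      rw [hB]
      rw [Real.div_rpow (abs_nonneg t) (by norm_num : (0:ℝ) ≤ 2)]
      rw [show (2:ℝ)^(ν-1) = 2^ν/2 by
        rw [Real.rpow_sub (by norm_num : (0:ℝ) < 2), Real.rpow_one]]
      have h2ν : (0:ℝ) < 2^ν := Real.rpow_pos_of_pos two_pos ν
      field_simp
    rw [← hreal]
    push_cast
    ring
  · have key0 := key_fubini ν hν 0
    have hstep : (∫ x : ℝ, (((1 + x ^ 2) ^ (-(ν + 1/2)) / betaFn ν (1/2) : ℝ) : ℂ)) =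
        ((betaFn ν (1/2) : ℝ) : ℂ)⁻¹ * ∫ x : ℝ, Complex.exp (-(Complex.I * (0:ℝ) * x)) *
          (((1 + x ^ 2) ^ (-(ν + 1/2)) : ℝ) : ℂ) := by
      rw [← MeasureTheory.integral_const_mul]
      congr 1; funext x
      rw [show (Complex.I * ((0:ℝ):ℂ) * (x:ℂ)) = 0 by push_cast; ring]
      simp only [neg_zero, Complex.exp_zero, one_mul]
      push_cast
      ring
    have hval : (∫ u in Ioi (0:ℝ), u ^ (ν - 1) * Real.exp (-(u + (0:ℝ)^2/(4*u))))
        = Real.Gamma ν := by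
      have := Real.integral_rpow_mul_exp_neg_mul_Ioi hν one_pos
      rw [show ((1:ℝ)/1) ^ ν * Real.Gamma ν = Real.Gamma ν by norm_num] at this
      rw [← this]
      apply setIntegral_congr_fun measurableSet_Ioi
      intro u hu
      simp only []
      norm_num
    rw [hstep, key0, hval]
    rw [show (Real.sqrt Real.pi / Real.Gamma (ν + 1/2) * Real.Gamma ν) = betaFn ν (1/2) by
      rw [hB]; field_simp]
    rw [← Complex.ofReal_inv, ← Complex.ofReal_mul,
      inv_mul_cancel₀ hBpos.ne', Complex.ofReal_one]
end
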